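/- arXiv:2605.15825 — 2 statements merged into one kernel-verified Lean document; each statement's English description precedes it below -/
import Mathlib

section
/- Let 0 < θ < 1 and 0 < ν < 1-θ. Let K : [0,1]×[0,1] → ℝ be continuous with |K(t,ϱ)| ≤ M for all t, ϱ, and assume K is uniformly Hölder continuous of exponent ν in its first variable: |K(t,ϱ) - K(s,ϱ)| ≤ L |t-s|^ν for all t, s, ϱ ∈ [0,1]. Then there exists a constant c > 0, depending only on θ, ν, M, L, such that for every continuous f : [0,1] → ℝ: (i) |(𝒦_R f)(t) - (𝒦_R f)(s)| ≤ c |t-s|^ν · sup_{[0,1]} |f| for all t ≠ s in [0,1], and (ii) sup_{t ∈ [0,1]} |(𝒦_R f)(t)| ≤ c · sup_{[0,1]} |f|. Consequently 𝒦_R maps C([0,1]) boundedly into the Hölder space C^{0,ν}([0,1]). -/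
open Real MeasureTheory

/-- The weakly singular adjoint Volterra integral operator
(𝒦_R f)(t) = ∫_t^1 (ϱ-t)^{-θ} K(t,ϱ) f(ϱ) dϱ. -/
noncomputable def KR (θ : ℝ) (K : ℝ → ℝ → ℝ) (f : ℝ → ℝ) (t : ℝ) : ℝ :=
  ∫ ϱ in t..1, (ϱ - t) ^ (-θ) * K t ϱ * f ϱ

/-- Integrability of the shifted singular kernel. -/
lemma sing_intble {θ : ℝ} (hθ : θ < 1) (s a b : ℝ) :
    IntervalIntegrable (fun ϱ => (ϱ - s) ^ (-θ)) volume a b := by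
  have h : IntervalIntegrable (fun x : ℝ => x ^ (-θ)) volume (a - s) (b - s) :=
    intervalIntegral.intervalIntegrable_rpow' (by linarith)
  simpa using h.comp_sub_right s

/-- Value of the singular integral. -/
lemma sing_int_val {θ : ℝ} (hθ0 : 0 < θ) (hθ1 : θ < 1) {s a b : ℝ} (hsa : s ≤ a) :
    ∫ ϱ in a..b, (ϱ - s) ^ (-θ) = ((b - s) ^ (1 - θ) - (a - s) ^ (1 - θ)) / (1 - θ) := by
  rw [intervalIntegral.integral_comp_sub_right (fun x => x ^ (-θ)) s,
    integral_rpow (Or.inl (by linarith))]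
  have h : -θ + 1 = 1 - θ := by ring
  rw [h]

/-- Bounding an interval integral by an integrable majorant on the open-closed interval. -/
lemma abs_int_le {F g : ℝ → ℝ} {a b : ℝ} (hab : a ≤ b)
    (hg : IntervalIntegrable g volume a b)
    (h : ∀ ϱ ∈ Set.Ioc a b, |F ϱ| ≤ g ϱ) :
    |∫ ϱ in a..b, F ϱ| ≤ ∫ ϱ in a..b, g ϱ := by
  have hae : ∀ᵐ x ∂volume.restrict (Set.uIoc a b), ‖F x‖ ≤ g x := by
    rw [Set.uIoc_of_le hab]
    exact (ae_restrict_iff' measurableSet_Ioc).2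
      (Filter.Eventually.of_forall fun x hx => by simpa [Real.norm_eq_abs] using h x hx)
  have h1 := intervalIntegral.norm_integral_le_abs_of_norm_le hae hg
  have h2 : 0 ≤ ∫ ϱ in a..b, g ϱ := by
    rw [intervalIntegral.integral_of_le hab]
    exact setIntegral_nonneg measurableSet_Ioc fun x hx => (abs_nonneg _).trans (h x hx)
  rw [abs_of_nonneg h2] at h1
  simpa [Real.norm_eq_abs] using h1

lemma abs_mul3_le {x k fv M S : ℝ} (hx : 0 ≤ x) (hk : |k| ≤ M) (hf : |fv| ≤ S) :
    |x * k * fv| ≤ x * (M * S) := by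
  rw [abs_mul, abs_mul, abs_of_nonneg hx, mul_assoc]
  exact mul_le_mul_of_nonneg_left
    (mul_le_mul hk hf (abs_nonneg _) ((abs_nonneg k).trans hk)) hx

/-- Hölder regularity of the weakly singular adjoint Volterra operator: 𝒦_R maps
C([0,1]) boundedly into C^{0,ν}([0,1]) for 0 < ν < 1-θ, with a constant depending
only on θ, ν, M, L. -/
theorem KR_holder_bound
    (θ ν M L : ℝ) (hθ0 : 0 < θ) (hθ1 : θ < 1) (hν0 : 0 < ν) (hν1 : ν < 1 - θ)
    (hM : 0 ≤ M) (hL : 0 ≤ L) :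
    ∃ c > 0, ∀ K : ℝ → ℝ → ℝ,
      ContinuousOn (fun p : ℝ × ℝ => K p.1 p.2) (Set.Icc 0 1 ×ˢ Set.Icc 0 1) →
      (∀ t ∈ Set.Icc (0:ℝ) 1, ∀ ϱ ∈ Set.Icc (0:ℝ) 1, |K t ϱ| ≤ M) →
      (∀ t ∈ Set.Icc (0:ℝ) 1, ∀ s ∈ Set.Icc (0:ℝ) 1, ∀ ϱ ∈ Set.Icc (0:ℝ) 1,
        |K t ϱ - K s ϱ| ≤ L * |t - s| ^ ν) →
      ∀ f : ℝ → ℝ, ContinuousOn f (Set.Icc 0 1) →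
        (∀ t ∈ Set.Icc (0:ℝ) 1, ∀ s ∈ Set.Icc (0:ℝ) 1, t ≠ s →
          |KR θ K f t - KR θ K f s|
            ≤ c * |t - s| ^ ν * sSup ((fun x => |f x|) '' Set.Icc 0 1)) ∧
        (∀ t ∈ Set.Icc (0:ℝ) 1,
          |KR θ K f t| ≤ c * sSup ((fun x => |f x|) '' Set.Icc 0 1)) := by
  have h1θ : 0 < 1 - θ := by linarith
  have hc2 : (0:ℝ) ≤ (2 * M + L) / (1 - θ) := by positivity
  have hc3 : (0:ℝ) ≤ M / (1 - θ) := by positivity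
  refine ⟨(2 * M + L) / (1 - θ) + M / (1 - θ) + 1, by positivity, ?_⟩
  intro K hKc hKM hKH f hf
  set c : ℝ := (2 * M + L) / (1 - θ) + M / (1 - θ) + 1 with hc
  set S : ℝ := sSup ((fun x => |f x|) '' Set.Icc 0 1) with hSdef
  have hfabs : ContinuousOn (fun x => |f x|) (Set.Icc (0:ℝ) 1) := hf.abs
  have hbdd : BddAbove ((fun x => |f x|) '' Set.Icc (0:ℝ) 1) :=
    (isCompact_Icc.image_of_continuousOn hfabs).bddAbove
  have hS : ∀ x ∈ Set.Icc (0:ℝ) 1, |f x| ≤ S := fun x hx =>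
    le_csSup hbdd ⟨x, hx, rfl⟩
  have hS0 : 0 ≤ S := (abs_nonneg (f 0)).trans (hS 0 ⟨le_refl 0, zero_le_one⟩)
  have hMS : 0 ≤ M * S := mul_nonneg hM hS0
  -- continuity of kernel slices
  have hKslice : ∀ t ∈ Set.Icc (0:ℝ) 1, ContinuousOn (fun ϱ => K t ϱ) (Set.Icc (0:ℝ) 1) := by
    intro t ht
    have : ContinuousOn (fun ϱ : ℝ => (fun p : ℝ × ℝ => K p.1 p.2) (t, ϱ)) (Set.Icc (0:ℝ) 1) :=
      hKc.comp (Continuous.continuousOn (by continuity)) (fun x hx => ⟨ht, hx⟩)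
    exact this
  -- sup-norm bound (part ii)
  have part2 : ∀ t ∈ Set.Icc (0:ℝ) 1, |KR θ K f t| ≤ M / (1 - θ) * S := by
    intro t ht
    have ht1 : t ≤ 1 := ht.2
    have hbound : |KR θ K f t| ≤ ∫ ϱ in t..1, (ϱ - t) ^ (-θ) * (M * S) := by
      refine abs_int_le ht1 ((sing_intble hθ1 t t 1).mul_const _) ?_
      intro ϱ hϱ
      have hϱ01 : ϱ ∈ Set.Icc (0:ℝ) 1 := ⟨le_trans ht.1 hϱ.1.le, hϱ.2⟩
      exact abs_mul3_le (Real.rpow_nonneg (by linarith [hϱ.1]) _) (hKM t ht ϱ hϱ01) (hS ϱ hϱ01)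
    have hzp : (0:ℝ) ^ (1 - θ) = 0 := Real.zero_rpow (by linarith)
    have hval : ∫ ϱ in t..1, (ϱ - t) ^ (-θ) * (M * S)
        = (1 - t) ^ (1 - θ) / (1 - θ) * (M * S) := by
      rw [intervalIntegral.integral_mul_const, sing_int_val hθ0 hθ1 (le_refl t)]
      rw [show t - t = (0:ℝ) by ring, hzp]
      ring
    rw [hval] at hbound
    have hle1 : (1 - t) ^ (1 - θ) ≤ 1 :=
      Real.rpow_le_one (by linarith [ht.2]) (by linarith [ht.1]) (by linarith)
    refine hbound.trans ?_
    have : (1 - t) ^ (1 - θ) / (1 - θ) ≤ 1 / (1 - θ) :=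
      div_le_div_of_nonneg_right hle1 h1θ.le
    calc (1 - t) ^ (1 - θ) / (1 - θ) * (M * S) ≤ 1 / (1 - θ) * (M * S) :=
          mul_le_mul_of_nonneg_right this hMS
      _ = M / (1 - θ) * S := by ring
  -- Hölder bound for s < t
  have key : ∀ t ∈ Set.Icc (0:ℝ) 1, ∀ s ∈ Set.Icc (0:ℝ) 1, s < t →
      |KR θ K f t - KR θ K f s| ≤ (2 * M + L) / (1 - θ) * (t - s) ^ ν * S := by
    intro t ht s hs hst
    have h0s : (0:ℝ) ≤ s := hs.1
    have ht1 : t ≤ 1 := ht.2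
    have h0t : (0:ℝ) ≤ t := ht.1
    have hs1 : s ≤ 1 := hs.2
    have hts0 : 0 < t - s := by linarith
    have hsub : Set.uIcc t (1:ℝ) ⊆ Set.Icc (0:ℝ) 1 := by
      rw [Set.uIcc_of_le ht1]; exact Set.Icc_subset_Icc h0t le_rfl
    have hsubst : Set.uIcc s t ⊆ Set.Icc (0:ℝ) 1 := by
      rw [Set.uIcc_of_le hst.le]; exact Set.Icc_subset_Icc h0s ht1
    have hKt := hKslice t ht
    have hKs := hKslice s hs
    -- integrabilities
    have iF : IntervalIntegrable (fun ϱ => (ϱ - t) ^ (-θ) * K t ϱ * f ϱ) volume t 1 :=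
      ((sing_intble hθ1 t t 1).mul_continuousOn (hKt.mono hsub)).mul_continuousOn
        (hf.mono hsub)
    have iG : IntervalIntegrable (fun ϱ => (ϱ - s) ^ (-θ) * K s ϱ * f ϱ) volume t 1 :=
      ((sing_intble hθ1 s t 1).mul_continuousOn (hKs.mono hsub)).mul_continuousOn
        (hf.mono hsub)
    have iGst : IntervalIntegrable (fun ϱ => (ϱ - s) ^ (-θ) * K s ϱ * f ϱ) volume s t :=
      ((sing_intble hθ1 s s t).mul_continuousOn (hKs.mono hsubst)).mul_continuousOn
        (hf.mono hsubst)
    have iH1 : IntervalIntegrable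
        (fun ϱ => ((ϱ - t) ^ (-θ) - (ϱ - s) ^ (-θ)) * K t ϱ * f ϱ) volume t 1 :=
      (((sing_intble hθ1 t t 1).sub (sing_intble hθ1 s t 1)).mul_continuousOn
        (hKt.mono hsub)).mul_continuousOn (hf.mono hsub)
    have iH2 : IntervalIntegrable
        (fun ϱ => (ϱ - s) ^ (-θ) * (K t ϱ - K s ϱ) * f ϱ) volume t 1 :=
      ((sing_intble hθ1 s t 1).mul_continuousOn ((hKt.sub hKs).mono hsub)).mul_continuousOn
        (hf.mono hsub)
    -- decomposition
    set I1 : ℝ := ∫ ϱ in t..1, ((ϱ - t) ^ (-θ) - (ϱ - s) ^ (-θ)) * K t ϱ * f ϱ with hI1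
    set I2 : ℝ := ∫ ϱ in t..1, (ϱ - s) ^ (-θ) * (K t ϱ - K s ϱ) * f ϱ with hI2
    set I3 : ℝ := ∫ ϱ in s..t, (ϱ - s) ^ (-θ) * K s ϱ * f ϱ with hI3
    have hsplit : I3 + (∫ ϱ in t..1, (ϱ - s) ^ (-θ) * K s ϱ * f ϱ) = KR θ K f s :=
      intervalIntegral.integral_add_adjacent_intervals iGst iG
    have hcomb : (∫ ϱ in t..1, (ϱ - t) ^ (-θ) * K t ϱ * f ϱ)
        - (∫ ϱ in t..1, (ϱ - s) ^ (-θ) * K s ϱ * f ϱ) = I1 + I2 := by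
      rw [← intervalIntegral.integral_sub iF iG, hI1, hI2,
        ← intervalIntegral.integral_add iH1 iH2]
      apply intervalIntegral.integral_congr
      intro ϱ _
      ring
    have hdecomp : KR θ K f t - KR θ K f s = I1 + I2 - I3 := by
      have hKRt : KR θ K f t = ∫ ϱ in t..1, (ϱ - t) ^ (-θ) * K t ϱ * f ϱ := rfl
      rw [hKRt, ← hsplit]
      linarith [hcomb]
    -- singular integral values
    have hzp : (0:ℝ) ^ (1 - θ) = 0 := Real.zero_rpow (by linarith)
    have vT : ∫ ϱ in t..(1:ℝ), (ϱ - t) ^ (-θ) = (1 - t) ^ (1 - θ) / (1 - θ) := by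
      rw [sing_int_val hθ0 hθ1 (le_refl t), show t - t = (0:ℝ) by ring, hzp]
      ring
    have vS : ∫ ϱ in t..(1:ℝ), (ϱ - s) ^ (-θ)
        = ((1 - s) ^ (1 - θ) - (t - s) ^ (1 - θ)) / (1 - θ) :=
      sing_int_val hθ0 hθ1 hst.le
    have vst : ∫ ϱ in s..t, (ϱ - s) ^ (-θ) = (t - s) ^ (1 - θ) / (1 - θ) := by
      rw [sing_int_val hθ0 hθ1 (le_refl s), show s - s = (0:ℝ) by ring, hzp]
      ring
    -- basic rpow facts
    have hts1 : t - s ≤ 1 := by linarith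
    have hexp : (t - s) ^ (1 - θ) ≤ (t - s) ^ ν :=
      Real.rpow_le_rpow_of_exponent_ge hts0 hts1 (by linarith)
    have htsν0 : 0 ≤ (t - s) ^ ν := Real.rpow_nonneg hts0.le _
    have h1s1 : (1 - s) ^ (1 - θ) ≤ 1 :=
      Real.rpow_le_one (by linarith) (by linarith) (by linarith)
    have h1t1s : (1 - t) ^ (1 - θ) ≤ (1 - s) ^ (1 - θ) :=
      Real.rpow_le_rpow (by linarith) (by linarith) (by linarith)
    have htsp0 : 0 ≤ (t - s) ^ (1 - θ) := Real.rpow_nonneg hts0.le _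
    -- bound on I1
    have bI1 : |I1| ≤ (t - s) ^ ν / (1 - θ) * (M * S) := by
      have h : |I1| ≤ ∫ ϱ in t..1, ((ϱ - t) ^ (-θ) - (ϱ - s) ^ (-θ)) * (M * S) := by
        refine abs_int_le ht1
          (((sing_intble hθ1 t t 1).sub (sing_intble hθ1 s t 1)).mul_const _) ?_
        intro ϱ hϱ
        have hϱ01 : ϱ ∈ Set.Icc (0:ℝ) 1 := ⟨le_trans h0t hϱ.1.le, hϱ.2⟩
        have hd : 0 ≤ (ϱ - t) ^ (-θ) - (ϱ - s) ^ (-θ) := by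
          have := Real.rpow_le_rpow_of_nonpos (by linarith [hϱ.1] : (0:ℝ) < ϱ - t)
            (by linarith : ϱ - t ≤ ϱ - s) (by linarith : -θ ≤ 0)
          linarith
        exact abs_mul3_le hd (hKM t ht ϱ hϱ01) (hS ϱ hϱ01)
      have hval : ∫ ϱ in t..1, ((ϱ - t) ^ (-θ) - (ϱ - s) ^ (-θ)) * (M * S)
          = ((1 - t) ^ (1 - θ) - ((1 - s) ^ (1 - θ) - (t - s) ^ (1 - θ))) / (1 - θ) * (M * S) := by
        rw [intervalIntegral.integral_mul_const,
          intervalIntegral.integral_sub (sing_intble hθ1 t t 1) (sing_intble hθ1 s t 1),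
          vT, vS]
        ring
      rw [hval] at h
      refine h.trans (mul_le_mul_of_nonneg_right ?_ hMS)
      exact div_le_div_of_nonneg_right (by linarith) h1θ.le
    -- bound on I2
    have bI2 : |I2| ≤ 1 / (1 - θ) * (L * (t - s) ^ ν * S) := by
      have hLS : 0 ≤ L * (t - s) ^ ν * S := by positivity
      have h : |I2| ≤ ∫ ϱ in t..1, (ϱ - s) ^ (-θ) * (L * (t - s) ^ ν * S) := by
        refine abs_int_le ht1 ((sing_intble hθ1 s t 1).mul_const _) ?_
        intro ϱ hϱ
        have hϱ01 : ϱ ∈ Set.Icc (0:ℝ) 1 := ⟨le_trans h0t hϱ.1.le, hϱ.2⟩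
        have hKd : |K t ϱ - K s ϱ| ≤ L * (t - s) ^ ν := by
          have h' := hKH t ht s hs ϱ hϱ01
          rwa [abs_of_pos hts0] at h'
        exact abs_mul3_le (Real.rpow_nonneg (by linarith [hϱ.1]) _) hKd (hS ϱ hϱ01)
      have hval : ∫ ϱ in t..1, (ϱ - s) ^ (-θ) * (L * (t - s) ^ ν * S)
          = ((1 - s) ^ (1 - θ) - (t - s) ^ (1 - θ)) / (1 - θ) * (L * (t - s) ^ ν * S) := by
        rw [intervalIntegral.integral_mul_const, vS]
      rw [hval] at h
      refine h.trans (mul_le_mul_of_nonneg_right ?_ hLS)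
      exact div_le_div_of_nonneg_right (by linarith) h1θ.le
    -- bound on I3
    have bI3 : |I3| ≤ (t - s) ^ ν / (1 - θ) * (M * S) := by
      have h : |I3| ≤ ∫ ϱ in s..t, (ϱ - s) ^ (-θ) * (M * S) := by
        refine abs_int_le hst.le ((sing_intble hθ1 s s t).mul_const _) ?_
        intro ϱ hϱ
        have hϱ01 : ϱ ∈ Set.Icc (0:ℝ) 1 := ⟨le_trans h0s hϱ.1.le, le_trans hϱ.2 ht1⟩
        exact abs_mul3_le (Real.rpow_nonneg (by linarith [hϱ.1]) _)
          (hKM s hs ϱ hϱ01) (hS ϱ hϱ01)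
      have hval : ∫ ϱ in s..t, (ϱ - s) ^ (-θ) * (M * S)
          = (t - s) ^ (1 - θ) / (1 - θ) * (M * S) := by
        rw [intervalIntegral.integral_mul_const, vst]
      rw [hval] at h
      refine h.trans (mul_le_mul_of_nonneg_right ?_ hMS)
      exact div_le_div_of_nonneg_right hexp h1θ.le
    -- combine
    have htot : |KR θ K f t - KR θ K f s| ≤ |I1| + |I2| + |I3| := by
      rw [hdecomp]
      calc |I1 + I2 - I3| ≤ |I1 + I2| + |I3| := abs_sub _ _
        _ ≤ |I1| + |I2| + |I3| := by linarith [abs_add_le I1 I2]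
    calc |KR θ K f t - KR θ K f s| ≤ |I1| + |I2| + |I3| := htot
      _ ≤ (t - s) ^ ν / (1 - θ) * (M * S) + 1 / (1 - θ) * (L * (t - s) ^ ν * S)
          + (t - s) ^ ν / (1 - θ) * (M * S) := by linarith
      _ = (2 * M + L) / (1 - θ) * (t - s) ^ ν * S := by ring
  constructor
  · intro t ht s hs htne
    have hcle : (2 * M + L) / (1 - θ) ≤ c := by rw [hc]; linarith
    rcases lt_or_gt_of_ne htne with h | h
    · have hk := key s hs t ht h
      have habs : |t - s| = s - t := by rw [abs_of_neg (by linarith)]; ring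
      have hnn : 0 ≤ (s - t) ^ ν := Real.rpow_nonneg (by linarith) _
      calc |KR θ K f t - KR θ K f s| = |KR θ K f s - KR θ K f t| := abs_sub_comm _ _
        _ ≤ (2 * M + L) / (1 - θ) * (s - t) ^ ν * S := hk
        _ ≤ c * (s - t) ^ ν * S :=
            mul_le_mul_of_nonneg_right (mul_le_mul_of_nonneg_right hcle hnn) hS0
        _ = c * |t - s| ^ ν * S := by rw [habs]
    · have hk := key t ht s hs h
      have habs : |t - s| = t - s := abs_of_pos (by linarith)
      have hnn : 0 ≤ (t - s) ^ ν := Real.rpow_nonneg (by linarith) _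
      calc |KR θ K f t - KR θ K f s|
          ≤ (2 * M + L) / (1 - θ) * (t - s) ^ ν * S := hk
        _ ≤ c * (t - s) ^ ν * S :=
            mul_le_mul_of_nonneg_right (mul_le_mul_of_nonneg_right hcle hnn) hS0
        _ = c * |t - s| ^ ν * S := by rw [habs]
  · intro t ht
    refine (part2 t ht).trans (mul_le_mul_of_nonneg_right ?_ hS0)
    rw [hc]; linarith
end

section
/- Let 0 < θ < 1, 0 < ν < 1-θ and 0 < ρ ≤ 1. Let K : [0,1]×[0,1] → ℝ be continuous with |K(t,ϱ)| ≤ M, and uniformly Hölder continuous of exponent ν in its first variable with constant L. Then there exists a constant c > 0, depending only on θ, ν, M, L and ρ, such that for every continuous f : [0,1] → ℝ and all t ≠ s in [0,1], |(𝒦_R f)(1-(1-t)^{1/ρ}) - (𝒦_R f)(1-(1-s)^{1/ρ})| ≤ c |t-s|^ν · sup_{[0,1]} |f|. Consequently the composed function t ↦ (𝒦_R f)(1-(1-t)^{1/ρ}) has C^{0,ν}([0,1]) norm bounded by c · sup_{[0,1]} |f|. -/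
open Real MeasureTheory

section Aux
open Set

lemma my_rpow_lip {p x y : ℝ} (hp : 1 ≤ p) (hy : 0 ≤ y) (hxy : y ≤ x) (hx : x ≤ 1) :
    x ^ p - y ^ p ≤ p * (x - y) := by
  have hder : ∀ z ∈ Icc y x, HasDerivWithinAt (fun t : ℝ => t ^ p) (p * z ^ (p - 1)) (Icc y x) z :=
    fun z _ => (Real.hasDerivAt_rpow_const (Or.inr hp)).hasDerivWithinAt
  have bound : ∀ z ∈ Ico y x, ‖p * z ^ (p - 1)‖ ≤ p := by
    intro z hz
    have hz0 : 0 ≤ z := hy.trans hz.1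
    have hz1 : z ≤ 1 := hz.2.le.trans hx
    rw [Real.norm_eq_abs, abs_mul, abs_of_nonneg (by linarith : (0:ℝ) ≤ p),
      abs_of_nonneg (Real.rpow_nonneg hz0 _)]
    have h1 : z ^ (p - 1) ≤ 1 := Real.rpow_le_one hz0 hz1 (by linarith)
    nlinarith
  have := norm_image_sub_le_of_norm_deriv_le_segment' hder bound x (right_mem_Icc.mpr hxy)
  rw [Real.norm_eq_abs] at this
  exact (le_abs_self _).trans this

lemma my_rpow_lip_abs {p x y : ℝ} (hp : 1 ≤ p) (hx : x ∈ Icc (0:ℝ) 1) (hy : y ∈ Icc (0:ℝ) 1) :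
    |x ^ p - y ^ p| ≤ p * |x - y| := by
  rcases le_total y x with h | h
  · rw [abs_of_nonneg (sub_nonneg.mpr (Real.rpow_le_rpow hy.1 h (by linarith))),
      abs_of_nonneg (sub_nonneg.mpr h)]
    exact my_rpow_lip hp hy.1 h hx.2
  · rw [abs_sub_comm, abs_sub_comm x y,
      abs_of_nonneg (sub_nonneg.mpr (Real.rpow_le_rpow hx.1 h (by linarith))),
      abs_of_nonneg (sub_nonneg.mpr h)]
    exact my_rpow_lip hp hx.1 h hy.2


lemma my_rpow_add_le {a b p : ℝ} (ha : 0 ≤ a) (hb : 0 ≤ b) (hp : 0 ≤ p) (hp1 : p ≤ 1) :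
    (a + b) ^ p ≤ a ^ p + b ^ p := by
  have key := NNReal.rpow_add_le_add_rpow a.toNNReal b.toNNReal hp hp1
  have := NNReal.coe_le_coe.mpr key
  push_cast [NNReal.coe_rpow, Real.coe_toNNReal a ha, Real.coe_toNNReal b hb] at this
  simpa using this

lemma my_int_shift {θ e c d : ℝ} (hθ1 : θ < 1) :
    ∫ ϱ in c..d, (ϱ - e) ^ (-θ) = ((d - e) ^ (1 - θ) - (c - e) ^ (1 - θ)) / (1 - θ) := by
  rw [intervalIntegral.integral_comp_sub_right (fun x => x ^ (-θ)) e,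
    integral_rpow (Or.inl (by linarith)), (by ring : -θ + 1 = 1 - θ)]

lemma my_integrable_shift {θ : ℝ} (hθ1 : θ < 1) (e a b : ℝ) :
    IntervalIntegrable (fun ϱ => (ϱ - e) ^ (-θ)) volume a b := by
  simpa using (intervalIntegral.intervalIntegrable_rpow'
    (by linarith : (-1:ℝ) < -θ) (a := a - e) (b := b - e)).comp_sub_right e

lemma KR_core (θ ν M L : ℝ) (hθ0 : 0 < θ) (hθ1 : θ < 1) (hν0 : 0 < ν) (hν1 : ν < 1 - θ)
    (hM : 0 ≤ M) (hL : 0 ≤ L) (K : ℝ → ℝ → ℝ)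
    (hKc : ContinuousOn (fun p : ℝ × ℝ => K p.1 p.2) (Set.Icc 0 1 ×ˢ Set.Icc 0 1))
    (hKb : ∀ t ∈ Set.Icc (0:ℝ) 1, ∀ ϱ ∈ Set.Icc (0:ℝ) 1, |K t ϱ| ≤ M)
    (hKh : ∀ t ∈ Set.Icc (0:ℝ) 1, ∀ s ∈ Set.Icc (0:ℝ) 1, ∀ ϱ ∈ Set.Icc (0:ℝ) 1,
      |K t ϱ - K s ϱ| ≤ L * |t - s| ^ ν)
    (f : ℝ → ℝ) (hf : ContinuousOn f (Set.Icc 0 1))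
    {a b : ℝ} (ha : a ∈ Set.Icc (0:ℝ) 1) (hb : b ∈ Set.Icc (0:ℝ) 1) (hab : a ≤ b) :
    |KR θ K f a - KR θ K f b|
      ≤ ((2 * M + L) / (1 - θ)) * (b - a) ^ ν * sSup ((fun x => |f x|) '' Set.Icc 0 1) := by
  set F := sSup ((fun x => |f x|) '' Set.Icc 0 1) with hF
  have hFbd : BddAbove ((fun x => |f x|) '' Set.Icc 0 1) :=
    (isCompact_Icc.image_of_continuousOn hf.abs).bddAbove
  have hFle : ∀ x ∈ Set.Icc (0:ℝ) 1, |f x| ≤ F := fun x hx => le_csSup hFbd ⟨x, hx, rfl⟩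
  have hF0 : 0 ≤ F := (abs_nonneg _).trans (hFle 0 (by norm_num))
  rcases eq_or_lt_of_le hab with rfl | hlt
  · simp [Real.zero_rpow hν0.ne']
  have hq0 : 0 < 1 - θ := by linarith
  have ha0 : 0 ≤ a := ha.1
  have hb1 : b ≤ 1 := hb.2
  have hh0 : 0 < b - a := by linarith
  have hh1 : b - a ≤ 1 := by linarith
  have hpow : (b - a) ^ (1 - θ) ≤ (b - a) ^ ν :=
    Real.rpow_le_rpow_of_exponent_ge hh0 hh1 hν1.le
  have hpow0 : 0 ≤ (b - a) ^ ν := Real.rpow_nonneg hh0.le _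
  -- continuity of slices
  have hKslice : ∀ c ∈ Set.Icc (0:ℝ) 1, ContinuousOn (fun ϱ => K c ϱ) (Set.Icc 0 1) := by
    intro c hc
    exact hKc.comp ((continuous_const.prodMk continuous_id).continuousOn)
      (fun ϱ hϱ => ⟨hc, hϱ⟩)
  have hKa := hKslice a ha
  have hKb' := hKslice b hb
  have hsub_ab : Set.uIcc a b ⊆ Set.Icc (0:ℝ) 1 := by
    rw [Set.uIcc_of_le hab]; exact Set.Icc_subset_Icc ha0 hb1
  have hsub_a1 : Set.uIcc a 1 ⊆ Set.Icc (0:ℝ) 1 := by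
    rw [Set.uIcc_of_le ha.2]; exact Set.Icc_subset_Icc ha0 le_rfl
  have hsub_b1 : Set.uIcc b 1 ⊆ Set.Icc (0:ℝ) 1 := by
    rw [Set.uIcc_of_le hb1]; exact Set.Icc_subset_Icc hb.1 le_rfl
  -- integrable pieces
  have Iab1 : IntervalIntegrable (fun ϱ => (ϱ - a) ^ (-θ) * (K a ϱ * f ϱ)) volume a b :=
    (my_integrable_shift hθ1 a a b).mul_continuousOn ((hKa.mul hf).mono hsub_ab)
  have Ib11 : IntervalIntegrable (fun ϱ => (ϱ - a) ^ (-θ) * (K a ϱ * f ϱ)) volume b 1 :=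
    (my_integrable_shift hθ1 a b 1).mul_continuousOn ((hKa.mul hf).mono hsub_b1)
  have Ib12 : IntervalIntegrable (fun ϱ => (ϱ - b) ^ (-θ) * (K b ϱ * f ϱ)) volume b 1 :=
    (my_integrable_shift hθ1 b b 1).mul_continuousOn ((hKb'.mul hf).mono hsub_b1)
  have ID1 : IntervalIntegrable
      (fun ϱ => ((ϱ - a) ^ (-θ) - (ϱ - b) ^ (-θ)) * (K a ϱ * f ϱ)) volume b 1 :=
    ((my_integrable_shift hθ1 a b 1).sub (my_integrable_shift hθ1 b b 1)).mul_continuousOn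
      ((hKa.mul hf).mono hsub_b1)
  have ID2 : IntervalIntegrable
      (fun ϱ => (ϱ - b) ^ (-θ) * ((K a ϱ - K b ϱ) * f ϱ)) volume b 1 :=
    (my_integrable_shift hθ1 b b 1).mul_continuousOn (((hKa.sub hKb').mul hf).mono hsub_b1)
  -- decomposition
  have e1 : KR θ K f a = (∫ ϱ in a..b, (ϱ - a) ^ (-θ) * (K a ϱ * f ϱ))
      + ∫ ϱ in b..1, (ϱ - a) ^ (-θ) * (K a ϱ * f ϱ) := by
    rw [KR]
    simp only [mul_assoc]
    exact (intervalIntegral.integral_add_adjacent_intervals Iab1 Ib11).symm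
  have e2 : (∫ ϱ in b..1, (ϱ - a) ^ (-θ) * (K a ϱ * f ϱ)) - KR θ K f b
      = (∫ ϱ in b..1, ((ϱ - a) ^ (-θ) - (ϱ - b) ^ (-θ)) * (K a ϱ * f ϱ))
      + ∫ ϱ in b..1, (ϱ - b) ^ (-θ) * ((K a ϱ - K b ϱ) * f ϱ) := by
    rw [KR]
    simp only [mul_assoc]
    rw [← intervalIntegral.integral_add ID1 ID2, ← intervalIntegral.integral_sub Ib11 Ib12]
    apply intervalIntegral.integral_congr
    intro ϱ _
    ring
  have key : KR θ K f a - KR θ K f b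
      = (∫ ϱ in a..b, (ϱ - a) ^ (-θ) * (K a ϱ * f ϱ))
      + ((∫ ϱ in b..1, ((ϱ - a) ^ (-θ) - (ϱ - b) ^ (-θ)) * (K a ϱ * f ϱ))
      + ∫ ϱ in b..1, (ϱ - b) ^ (-θ) * ((K a ϱ - K b ϱ) * f ϱ)) := by
    rw [e1, ← e2]; ring
  -- bound T1
  have B1 : |∫ ϱ in a..b, (ϱ - a) ^ (-θ) * (K a ϱ * f ϱ)| ≤ M * F * (b - a) ^ ν / (1 - θ) := by
    have hbd : ∀ᵐ ϱ ∂volume.restrict (Set.uIoc a b),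
        ‖(ϱ - a) ^ (-θ) * (K a ϱ * f ϱ)‖ ≤ (ϱ - a) ^ (-θ) * (M * F) := by
      rw [ae_restrict_iff' measurableSet_uIoc]
      refine Filter.Eventually.of_forall (fun ϱ hϱ => ?_)
      rw [Set.uIoc_of_le hab] at hϱ
      have hϱm : ϱ ∈ Set.Icc (0:ℝ) 1 := ⟨ha0.trans hϱ.1.le, hϱ.2.trans hb1⟩
      have hk0 : 0 ≤ (ϱ - a) ^ (-θ) := Real.rpow_nonneg (by linarith [hϱ.1]) _
      rw [Real.norm_eq_abs, abs_mul, abs_of_nonneg hk0, abs_mul]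
      exact mul_le_mul_of_nonneg_left
        (mul_le_mul (hKb a ha ϱ hϱm) (hFle ϱ hϱm) (abs_nonneg _) hM) hk0
    have hbint : IntervalIntegrable (fun ϱ => (ϱ - a) ^ (-θ) * (M * F)) volume a b :=
      (my_integrable_shift hθ1 a a b).mul_const _
    refine (intervalIntegral.norm_integral_le_abs_of_norm_le hbd hbint).trans ?_
    rw [intervalIntegral.integral_mul_const, my_int_shift hθ1, sub_self,
      Real.zero_rpow (by linarith : (1:ℝ) - θ ≠ 0)]
    have h1 : 0 ≤ (b - a) ^ (1 - θ) := Real.rpow_nonneg hh0.le _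
    rw [sub_zero, abs_of_nonneg (mul_nonneg (div_nonneg h1 hq0.le) (mul_nonneg hM hF0)),
      div_mul_eq_mul_div, div_le_div_iff₀ hq0 hq0]
    nlinarith [mul_le_mul_of_nonneg_left hpow (mul_nonneg hM hF0)]
  -- bound T2
  have B2 : |∫ ϱ in b..1, ((ϱ - a) ^ (-θ) - (ϱ - b) ^ (-θ)) * (K a ϱ * f ϱ)|
      ≤ M * F * (b - a) ^ ν / (1 - θ) := by
    have hbd : ∀ᵐ ϱ ∂volume.restrict (Set.uIoc b 1),
        ‖((ϱ - a) ^ (-θ) - (ϱ - b) ^ (-θ)) * (K a ϱ * f ϱ)‖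
          ≤ ((ϱ - b) ^ (-θ) - (ϱ - a) ^ (-θ)) * (M * F) := by
      rw [ae_restrict_iff' measurableSet_uIoc]
      refine Filter.Eventually.of_forall (fun ϱ hϱ => ?_)
      rw [Set.uIoc_of_le hb1] at hϱ
      have hϱm : ϱ ∈ Set.Icc (0:ℝ) 1 := ⟨hb.1.trans hϱ.1.le, hϱ.2⟩
      have hk12 : (ϱ - a) ^ (-θ) ≤ (ϱ - b) ^ (-θ) :=
        Real.rpow_le_rpow_of_nonpos (by linarith [hϱ.1]) (by linarith) (by linarith)
      rw [Real.norm_eq_abs, abs_mul, abs_sub_comm, abs_of_nonneg (sub_nonneg.mpr hk12), abs_mul]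
      exact mul_le_mul_of_nonneg_left
        (mul_le_mul (hKb a ha ϱ hϱm) (hFle ϱ hϱm) (abs_nonneg _) hM) (sub_nonneg.mpr hk12)
    have hbint : IntervalIntegrable
        (fun ϱ => ((ϱ - b) ^ (-θ) - (ϱ - a) ^ (-θ)) * (M * F)) volume b 1 :=
      ((my_integrable_shift hθ1 b b 1).sub (my_integrable_shift hθ1 a b 1)).mul_const _
    refine (intervalIntegral.norm_integral_le_abs_of_norm_le hbd hbint).trans ?_
    rw [intervalIntegral.integral_mul_const,
      intervalIntegral.integral_sub (my_integrable_shift hθ1 b b 1)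
        (my_integrable_shift hθ1 a b 1),
      my_int_shift hθ1, my_int_shift hθ1, sub_self,
      Real.zero_rpow (by linarith : (1:ℝ) - θ ≠ 0)]
    have hXY : (1 - b) ^ (1 - θ) ≤ (1 - a) ^ (1 - θ) :=
      Real.rpow_le_rpow (by linarith) (by linarith) hq0.le
    have hsub : (1 - a) ^ (1 - θ) ≤ (1 - b) ^ (1 - θ) + (b - a) ^ (1 - θ) := by
      have := my_rpow_add_le (a := 1 - b) (b := b - a) (by linarith) hh0.le hq0.le (by linarith)
      rwa [(by ring : (1 - b) + (b - a) = 1 - a)] at this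
    have hH0 : 0 ≤ (b - a) ^ (1 - θ) := Real.rpow_nonneg hh0.le _
    have habs : |((1 - b) ^ (1 - θ) - 0) / (1 - θ)
        - ((1 - a) ^ (1 - θ) - (b - a) ^ (1 - θ)) / (1 - θ)| ≤ (b - a) ^ ν / (1 - θ) := by
      rw [sub_zero, div_sub_div_same, abs_div, abs_of_pos hq0]
      gcongr
      exact (abs_le.mpr ⟨by linarith, by linarith⟩).trans hpow
    rw [abs_mul, abs_of_nonneg (mul_nonneg hM hF0)]
    calc |((1 - b) ^ (1 - θ) - 0) / (1 - θ)
          - ((1 - a) ^ (1 - θ) - (b - a) ^ (1 - θ)) / (1 - θ)| * (M * F)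
        ≤ ((b - a) ^ ν / (1 - θ)) * (M * F) :=
          mul_le_mul_of_nonneg_right habs (mul_nonneg hM hF0)
      _ = M * F * (b - a) ^ ν / (1 - θ) := by ring
  -- bound T3
  have B3 : |∫ ϱ in b..1, (ϱ - b) ^ (-θ) * ((K a ϱ - K b ϱ) * f ϱ)|
      ≤ L * F * (b - a) ^ ν / (1 - θ) := by
    have hab' : |a - b| = b - a := by rw [abs_sub_comm, abs_of_nonneg hh0.le]
    have hbd : ∀ᵐ ϱ ∂volume.restrict (Set.uIoc b 1),
        ‖(ϱ - b) ^ (-θ) * ((K a ϱ - K b ϱ) * f ϱ)‖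
          ≤ (ϱ - b) ^ (-θ) * (L * (b - a) ^ ν * F) := by
      rw [ae_restrict_iff' measurableSet_uIoc]
      refine Filter.Eventually.of_forall (fun ϱ hϱ => ?_)
      rw [Set.uIoc_of_le hb1] at hϱ
      have hϱm : ϱ ∈ Set.Icc (0:ℝ) 1 := ⟨hb.1.trans hϱ.1.le, hϱ.2⟩
      have hk0 : 0 ≤ (ϱ - b) ^ (-θ) := Real.rpow_nonneg (by linarith [hϱ.1]) _
      rw [Real.norm_eq_abs, abs_mul, abs_of_nonneg hk0, abs_mul]
      refine mul_le_mul_of_nonneg_left ?_ hk0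
      have h1 := hKh a ha b hb ϱ hϱm
      rw [hab'] at h1
      exact mul_le_mul h1 (hFle ϱ hϱm) (abs_nonneg _)
        (mul_nonneg hL hpow0)
    have hbint : IntervalIntegrable
        (fun ϱ => (ϱ - b) ^ (-θ) * (L * (b - a) ^ ν * F)) volume b 1 :=
      (my_integrable_shift hθ1 b b 1).mul_const _
    refine (intervalIntegral.norm_integral_le_abs_of_norm_le hbd hbint).trans ?_
    rw [intervalIntegral.integral_mul_const, my_int_shift hθ1, sub_self,
      Real.zero_rpow (by linarith : (1:ℝ) - θ ≠ 0), sub_zero]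
    have h1b : (1 - b) ^ (1 - θ) ≤ 1 := Real.rpow_le_one (by linarith) (by linarith) hq0.le
    have h1b0 : 0 ≤ (1 - b) ^ (1 - θ) := Real.rpow_nonneg (by linarith) _
    rw [abs_of_nonneg (mul_nonneg (div_nonneg h1b0 hq0.le)
      (mul_nonneg (mul_nonneg hL hpow0) hF0)), div_mul_eq_mul_div, div_le_div_iff₀ hq0 hq0]
    nlinarith [mul_le_mul_of_nonneg_right h1b (mul_nonneg (mul_nonneg hL hpow0) hF0)]
  -- combine
  rw [key]
  have habs1 := abs_add_le (∫ ϱ in a..b, (ϱ - a) ^ (-θ) * (K a ϱ * f ϱ))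
    ((∫ ϱ in b..1, ((ϱ - a) ^ (-θ) - (ϱ - b) ^ (-θ)) * (K a ϱ * f ϱ))
      + ∫ ϱ in b..1, (ϱ - b) ^ (-θ) * ((K a ϱ - K b ϱ) * f ϱ))
  have habs2 := abs_add_le (∫ ϱ in b..1, ((ϱ - a) ^ (-θ) - (ϱ - b) ^ (-θ)) * (K a ϱ * f ϱ))
    (∫ ϱ in b..1, (ϱ - b) ^ (-θ) * ((K a ϱ - K b ϱ) * f ϱ))
  have hfin : M * F * (b - a) ^ ν / (1 - θ) + (M * F * (b - a) ^ ν / (1 - θ)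
      + L * F * (b - a) ^ ν / (1 - θ)) = (2 * M + L) / (1 - θ) * (b - a) ^ ν * F := by
    field_simp
    ring
  linarith

end Aux

/-- Hölder regularity of the weakly singular adjoint Volterra operator composed with the
backward endpoint map t ↦ 1-(1-t)^{1/ρ}: the composition is uniformly ν-Hölder with
constant bounded by c · sup|f|, where c depends only on θ, ν, M, L, ρ. -/
theorem KR_holder_bound_transformed
    (θ ν ρ M L : ℝ) (hθ0 : 0 < θ) (hθ1 : θ < 1) (hν0 : 0 < ν) (hν1 : ν < 1 - θ)
    (hρ0 : 0 < ρ) (hρ1 : ρ ≤ 1) (hM : 0 ≤ M) (hL : 0 ≤ L) :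
    ∃ c > 0, ∀ K : ℝ → ℝ → ℝ,
      ContinuousOn (fun p : ℝ × ℝ => K p.1 p.2) (Set.Icc 0 1 ×ˢ Set.Icc 0 1) →
      (∀ t ∈ Set.Icc (0:ℝ) 1, ∀ ϱ ∈ Set.Icc (0:ℝ) 1, |K t ϱ| ≤ M) →
      (∀ t ∈ Set.Icc (0:ℝ) 1, ∀ s ∈ Set.Icc (0:ℝ) 1, ∀ ϱ ∈ Set.Icc (0:ℝ) 1,
        |K t ϱ - K s ϱ| ≤ L * |t - s| ^ ν) →
      ∀ f : ℝ → ℝ, ContinuousOn f (Set.Icc 0 1) →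
        ∀ t ∈ Set.Icc (0:ℝ) 1, ∀ s ∈ Set.Icc (0:ℝ) 1, t ≠ s →
          |KR θ K f (1 - (1 - t) ^ (1 / ρ)) - KR θ K f (1 - (1 - s) ^ (1 / ρ))|
            ≤ c * |t - s| ^ ν * sSup ((fun x => |f x|) '' Set.Icc 0 1) := by
  have hq0 : 0 < 1 - θ := by linarith
  set C0 : ℝ := (2 * M + L) / (1 - θ) with hC0def
  have hC0 : 0 ≤ C0 := div_nonneg (by linarith) hq0.le
  set p : ℝ := 1 / ρ with hpdef
  have hp0 : 0 < p := by positivity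
  have hp1 : 1 ≤ p := one_le_one_div hρ0 hρ1
  have hpν : 0 < p ^ ν := Real.rpow_pos_of_pos hp0 _
  refine ⟨(C0 + 1) * p ^ ν, by positivity, ?_⟩
  intro K hKc hKb hKh f hf t ht s hs _
  set F := sSup ((fun x => |f x|) '' Set.Icc 0 1) with hFdef
  have hFbd : BddAbove ((fun x => |f x|) '' Set.Icc 0 1) :=
    (isCompact_Icc.image_of_continuousOn hf.abs).bddAbove
  have hF0 : 0 ≤ F :=
    (abs_nonneg (f 0)).trans (le_csSup hFbd ⟨0, by norm_num, rfl⟩)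
  have hmem : ∀ u ∈ Set.Icc (0:ℝ) 1, 1 - (1 - u) ^ p ∈ Set.Icc (0:ℝ) 1 := by
    intro u hu
    have h0 : 0 ≤ (1 - u) ^ p := Real.rpow_nonneg (by linarith [hu.2]) _
    have h1 : (1 - u) ^ p ≤ 1 :=
      Real.rpow_le_one (by linarith [hu.2]) (by linarith [hu.1]) (by linarith)
    exact ⟨by linarith, by linarith⟩
  set A : ℝ := 1 - (1 - t) ^ p with hAdef
  set B : ℝ := 1 - (1 - s) ^ p with hBdef
  have hA := hmem t ht
  have hB := hmem s hs
  have hlip : |A - B| ≤ p * |t - s| := by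
    have h1 : A - B = (1 - s) ^ p - (1 - t) ^ p := by rw [hAdef, hBdef]; ring
    have h2 := my_rpow_lip_abs hp1 (x := 1 - s) (y := 1 - t)
      ⟨by linarith [hs.2], by linarith [hs.1]⟩ ⟨by linarith [ht.2], by linarith [ht.1]⟩
    rw [h1]
    simpa [(by ring : (1 - s) - (1 - t) = t - s), abs_sub_comm t s] using h2
  have hmain : |KR θ K f A - KR θ K f B| ≤ C0 * |A - B| ^ ν * F := by
    rcases le_total A B with h | h
    · have := KR_core θ ν M L hθ0 hθ1 hν0 hν1 hM hL K hKc hKb hKh f hf hA hB h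
      have he : |A - B| = B - A := by
        rw [abs_sub_comm]; exact abs_of_nonneg (sub_nonneg.mpr h)
      rw [he]; exact this
    · have := KR_core θ ν M L hθ0 hθ1 hν0 hν1 hM hL K hKc hKb hKh f hf hB hA h
      rw [abs_sub_comm] at this
      have he : |A - B| = A - B := abs_of_nonneg (sub_nonneg.mpr h)
      rw [he]; exact this
  refine hmain.trans ?_
  have h1 : |A - B| ^ ν ≤ p ^ ν * |t - s| ^ ν := by
    calc |A - B| ^ ν ≤ (p * |t - s|) ^ ν :=
          Real.rpow_le_rpow (abs_nonneg _) hlip hν0.le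
      _ = p ^ ν * |t - s| ^ ν := Real.mul_rpow hp0.le (abs_nonneg _)
  have hts0 : 0 ≤ |t - s| ^ ν := Real.rpow_nonneg (abs_nonneg _) _
  have step : C0 * |A - B| ^ ν ≤ (C0 + 1) * (p ^ ν * |t - s| ^ ν) := by
    nlinarith [mul_le_mul_of_nonneg_left h1 hC0, mul_nonneg hpν.le hts0]
  nlinarith [mul_le_mul_of_nonneg_right step hF0]
end
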